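/- arXiv:1703.09669 — 3 statements merged into one kernel-verified Lean document; each statement's English description precedes it below -/
import Mathlib

section
/- Second Lyapunov inequality: let r* ∈ A be lex-optimal and let J ∈ A_0 (i.e., J ≥ 0, Σ_{i∈S} J_i ≤ f(S) for all S ⊆ N, and Σ_{i∈N} J_i = f(N)). Then Σ_{i∈N} (1/D_i) r*_i (J_i − r*_i) ≥ 0. -/
open Finset
open scoped Classical

noncomputable section

namespace SharingEcon

variable {V : Type*} [Fintype V] [DecidableEq V]

/-- The set of neighbors of a set of nodes: `N_S = ⋃ i ∈ S, N_i`. -/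
def nbrs (G : SimpleGraph V) [DecidableRel G.Adj] (S : Finset V) : Finset V :=
  S.biUnion fun i => G.neighborFinset i

/-- The set function `f(S) = ∑_{j ∈ N_S} D_j`. -/
def fS (G : SimpleGraph V) [DecidableRel G.Adj] (D : V → ℝ) (S : Finset V) : ℝ :=
  ∑ j ∈ nbrs G S, D j

/-- The polymatroid polyhedron `A` of a set function `f`. -/
def polyA (f : Finset V → ℝ) : Set (V → ℝ) :=
  {r | (∀ i, 0 ≤ r i) ∧ ∀ S : Finset V, ∑ i ∈ S, r i ≤ f S}

/-- The base `A₀` of the polymatroid. -/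
def polyBase (f : Finset V → ℝ) : Set (V → ℝ) :=
  {r | r ∈ polyA f ∧ ∑ i, r i = f Finset.univ}

/-- The coordinates of a vector sorted in nondecreasing order. -/
def sortedVec (x : V → ℝ) : List ℝ :=
  (Finset.univ.val.map x).sort (· ≤ ·)

/-- `x` is lexicographically at least `y` (comparing sorted coordinate vectors). -/
def lexGE (x y : V → ℝ) : Prop :=
  sortedVec x = sortedVec y ∨
    ∃ k : ℕ, (∀ j < k, (sortedVec x).getD j 0 = (sortedVec y).getD j 0) ∧
      (sortedVec y).getD k 0 < (sortedVec x).getD k 0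

/-- `r` is lexicographically optimal in `A` for the sharing-ratio vectors `(r i / D i)`. -/
def LexOptimal (A : Set (V → ℝ)) (D : V → ℝ) (r : V → ℝ) : Prop :=
  r ∈ A ∧ ∀ r' ∈ A, lexGE (fun i => r i / D i) (fun i => r' i / D i)

/-- The sharing ratio of node `i`. -/
def ratio (D r : V → ℝ) (i : V) : ℝ := r i / D i

/-- The distinct values of the sharing ratios, sorted increasingly. -/
def vals (D r : V → ℝ) : List ℝ :=
  (Finset.univ.image (ratio D r)).sort (· ≤ ·)

/-- The number `K(r)` of distinct sharing-ratio values. -/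
def numLevels (D r : V → ℝ) : ℕ := (vals D r).length

/-- The `k`-th smallest distinct ratio value `v_k(r)` (1-indexed). -/
def v (D r : V → ℝ) (k : ℕ) : ℝ := (vals D r).getD (k - 1) 0

/-- The `k`-th level set `L_k(r)` (1-indexed). -/
def level (D r : V → ℝ) (k : ℕ) : Finset V :=
  Finset.univ.filter fun i => ratio D r i = v D r k

end SharingEcon
namespace SharingEcon

section Aux
set_option linter.unusedSectionVars false
variable {V : Type*} [Fintype V] [DecidableEq V]

/-- number of coordinates of `x` that are `≤ t`. -/
def cnt (x : V → ℝ) (t : ℝ) : ℕ := (Finset.univ.filter fun i => x i ≤ t).card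

lemma countP_sortedVec (x : V → ℝ) (t : ℝ) :
    (sortedVec x).countP (fun a => decide (a ≤ t)) = cnt x t := by
  have h : Multiset.countP (fun a => a ≤ t) ↑(sortedVec x)
      = Multiset.countP (fun a => a ≤ t) (Finset.univ.val.map x) := by
    rw [sortedVec, Multiset.sort_eq]
  rw [Multiset.coe_countP] at h
  rw [h, Multiset.countP_map, cnt, Finset.card_filter, Finset.sum_boole]
  · simp [Multiset.countP_eq_card_filter]
    rfl

lemma length_sortedVec (x : V → ℝ) : (sortedVec x).length = Fintype.card V := by
  rw [sortedVec, Multiset.length_sort, Multiset.card_map]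
  rfl

lemma sortedVec_sorted (x : V → ℝ) : (sortedVec x).Pairwise (· ≤ ·) :=
  Multiset.pairwise_sort _ _

lemma countP_eq_countP_take {l : List ℝ} (hs : l.Pairwise (· ≤ ·)) {k : ℕ} (hk : k < l.length)
    {t : ℝ} (ht : t < l[k]) :
    l.countP (fun a => decide (a ≤ t)) = (l.take k).countP (fun a => decide (a ≤ t)) := by
  have hsplit := List.take_append_drop k l
  have hzero : (l.drop k).countP (fun a => decide (a ≤ t)) = 0 := by
    rw [List.countP_eq_zero]
    intro a ha
    simp only [decide_eq_true_eq]
    intro hat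
    have : l[k] ≤ a := by
      rw [List.drop_eq_getElem_cons hk] at ha
      rcases List.mem_cons.1 ha with h | h
      · exact h ▸ le_refl _
      · have hsd : (l.drop k).Pairwise (· ≤ ·) := hs.drop
        rw [List.drop_eq_getElem_cons hk] at hsd
        exact (List.pairwise_cons.1 hsd).1 a h
    linarith
  conv_lhs => rw [← hsplit]
  rw [List.countP_append, hzero, Nat.add_zero]

lemma countP_le_of_sorted_gt {l : List ℝ} (hs : l.Pairwise (· ≤ ·)) {k : ℕ} (hk : k < l.length)
    {t : ℝ} (ht : t < l[k]) : l.countP (fun a => decide (a ≤ t)) ≤ k := by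
  rw [countP_eq_countP_take hs hk ht]
  exact le_trans List.countP_le_length (by simp [List.length_take])

lemma countP_ge_of_sorted_le {l : List ℝ} (hs : l.Pairwise (· ≤ ·)) {k : ℕ} (hk : k < l.length)
    {t : ℝ} (ht : l[k] ≤ t) : k + 1 ≤ l.countP (fun a => decide (a ≤ t)) := by
  have hsplit := List.take_append_drop (k+1) l
  have hlen : (l.take (k+1)).length = k+1 := by simp [List.length_take]; omega
  have hall : (l.take (k+1)).countP (fun a => decide (a ≤ t)) = k + 1 := by
    have heq : (l.take (k+1)).countP (fun a => decide (a ≤ t)) = (l.take (k+1)).length := by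
      rw [List.countP_eq_length]
      intro a ha
      simp only [decide_eq_true_eq]
      obtain ⟨j, hj, rfl⟩ := List.getElem_of_mem ha
      rw [List.getElem_take]
      have hjk : j ≤ k := by rw [hlen] at hj; omega
      have : l[j] ≤ l[k] := by
        rcases eq_or_lt_of_le hjk with h | h
        · subst h; exact le_refl _
        · exact hs.rel_get_of_lt (by simpa using h)
      linarith
    rw [heq, hlen]
  calc k + 1 = (l.take (k+1)).countP (fun a => decide (a ≤ t)) := hall.symm
    _ ≤ (l.take (k+1)).countP _ + (l.drop (k+1)).countP (fun a => decide (a ≤ t)) :=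
        Nat.le_add_right _ _
    _ = l.countP (fun a => decide (a ≤ t)) := by
        conv_rhs => rw [← hsplit]
        rw [List.countP_append]

lemma lexLT_of_cnt (x y : V → ℝ)
    (h1 : ∃ t, cnt y t < cnt x t)
    (h2 : ∀ t, cnt y t ≤ cnt x t ∨ ∃ s < t, cnt y s < cnt x s) :
    ∃ k, (∀ j < k, (sortedVec x).getD j 0 = (sortedVec y).getD j 0) ∧
      (sortedVec x).getD k 0 < (sortedVec y).getD k 0 := by
  set l := sortedVec x with hl
  set l' := sortedVec y with hl'
  have hsl : l.Pairwise (· ≤ ·) := sortedVec_sorted x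
  have hsl' : l'.Pairwise (· ≤ ·) := sortedVec_sorted y
  have hlen : l.length = Fintype.card V := length_sortedVec x
  have hlen' : l'.length = Fintype.card V := length_sortedVec y
  have hcx : ∀ t, l.countP (fun a => decide (a ≤ t)) = cnt x t := countP_sortedVec x
  have hcy : ∀ t, l'.countP (fun a => decide (a ≤ t)) = cnt y t := countP_sortedVec y
  have hexists : ∃ j, l.getD j 0 ≠ l'.getD j 0 := by
    by_contra hno
    push_neg at hno
    have : l = l' := by
      apply List.ext_getElem (by rw [hlen, hlen'])
      intro j hj hj'
      have := hno j
      rwa [List.getD_eq_getElem _ _ hj, List.getD_eq_getElem _ _ hj'] at this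
    obtain ⟨t, ht⟩ := h1
    rw [← hcx t, ← hcy t, this] at ht
    exact lt_irrefl _ ht
  classical
  let k := Nat.find hexists
  have hPk : l.getD k 0 ≠ l'.getD k 0 := Nat.find_spec hexists
  have hbefore : ∀ j < k, l.getD j 0 = l'.getD j 0 := by
    intro j hj
    by_contra hne
    exact Nat.find_min hexists hj hne
  have hk : k < l.length := by
    by_contra hge
    push_neg at hge
    have hge' : l'.length ≤ k := by rw [hlen', ← hlen]; exact hge
    apply hPk
    rw [List.getD_eq_default _ _ hge, List.getD_eq_default _ _ hge']
  have hk' : k < l'.length := by rw [hlen', ← hlen]; exact hk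
  have htake : l.take k = l'.take k := by
    apply List.ext_getElem (by simp [List.length_take]; omega)
    intro j hj hj'
    rw [List.getElem_take, List.getElem_take]
    have hjk : j < k := by simp [List.length_take] at hj; exact hj.1
    have := hbefore j hjk
    rwa [List.getD_eq_getElem _ _ (lt_trans hjk hk),
      List.getD_eq_getElem _ _ (lt_trans hjk hk')] at this
  have hkey : l[k] < l'[k] := by
    rcases lt_trichotomy l[k] l'[k] with h | h | h
    · exact h
    · exfalso; apply hPk
      rw [List.getD_eq_getElem _ _ hk, List.getD_eq_getElem _ _ hk']; exact h
    · exfalso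
      set t := l'[k] with htdef
      have hxle : cnt x t ≤ k := by
        rw [← hcx t]; exact countP_le_of_sorted_gt hsl hk h
      have hyge : k + 1 ≤ cnt y t := by
        rw [← hcy t]; exact countP_ge_of_sorted_le hsl' hk' (le_refl _)
      rcases h2 t with hle | ⟨s, hst, hs⟩
      · omega
      · have hex : cnt x s = cnt y s := by
          rw [← hcx s, ← hcy s]
          rw [countP_eq_countP_take hsl hk (lt_trans hst h),
              countP_eq_countP_take hsl' hk' hst, htake]
        omega
  refine ⟨k, hbefore, ?_⟩
  rw [List.getD_eq_getElem _ _ hk, List.getD_eq_getElem _ _ hk']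
  exact hkey

lemma not_lexGE_of_cnt (x y : V → ℝ) (hge : lexGE x y)
    (h1 : ∃ t, cnt y t < cnt x t)
    (h2 : ∀ t, cnt y t ≤ cnt x t ∨ ∃ s < t, cnt y s < cnt x s) : False := by
  obtain ⟨k2, hb2, hlt2⟩ := lexLT_of_cnt x y h1 h2
  rcases hge with heq | ⟨k1, hb1, hlt1⟩
  · rw [heq] at hlt2; exact lt_irrefl _ hlt2
  · rcases lt_trichotomy k1 k2 with h | h | h
    · have := hb2 k1 h; rw [this] at hlt1; exact lt_irrefl _ hlt1
    · subst h; exact lt_irrefl _ (lt_trans hlt1 hlt2)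
    · have := hb1 k2 h; rw [this] at hlt2; exact lt_irrefl _ hlt2

lemma fS_empty (G : SimpleGraph V) [DecidableRel G.Adj] (D : V → ℝ) : fS G D ∅ = 0 := by
  simp [fS, nbrs]

lemma fS_submodular (G : SimpleGraph V) [DecidableRel G.Adj] (D : V → ℝ) (hD : ∀ i, 0 < D i)
    (S T : Finset V) : fS G D (S ∪ T) + fS G D (S ∩ T) ≤ fS G D S + fS G D T := by
  have hunion : nbrs G (S ∪ T) = nbrs G S ∪ nbrs G T := by
    ext j
    simp only [nbrs, Finset.mem_biUnion, Finset.mem_union]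
    constructor
    · rintro ⟨i, hi | hi, hj⟩
      · exact Or.inl ⟨i, hi, hj⟩
      · exact Or.inr ⟨i, hi, hj⟩
    · rintro (⟨i, hi, hj⟩ | ⟨i, hi, hj⟩)
      · exact ⟨i, Or.inl hi, hj⟩
      · exact ⟨i, Or.inr hi, hj⟩
  have hinter : nbrs G (S ∩ T) ⊆ nbrs G S ∩ nbrs G T := by
    intro j hj
    simp only [nbrs, Finset.mem_biUnion, Finset.mem_inter] at hj ⊢
    obtain ⟨i, hi, hji⟩ := hj
    exact ⟨⟨i, hi.1, hji⟩, ⟨i, hi.2, hji⟩⟩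
  have h1 : fS G D (S ∩ T) ≤ ∑ j ∈ nbrs G S ∩ nbrs G T, D j :=
    Finset.sum_le_sum_of_subset_of_nonneg hinter (fun i _ _ => (hD i).le)
  have h2 : ∑ j ∈ nbrs G S ∪ nbrs G T, D j + ∑ j ∈ nbrs G S ∩ nbrs G T, D j
      = fS G D S + fS G D T := Finset.sum_union_inter
  calc fS G D (S ∪ T) + fS G D (S ∩ T)
      ≤ ∑ j ∈ nbrs G S ∪ nbrs G T, D j + ∑ j ∈ nbrs G S ∩ nbrs G T, D j := by
        apply add_le_add _ h1
        rw [fS, hunion]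
    _ = fS G D S + fS G D T := h2

/-- `S` is tight for `r`. -/
def Tight (G : SimpleGraph V) [DecidableRel G.Adj] (D : V → ℝ) (r : V → ℝ) (S : Finset V) :
    Prop := ∑ i ∈ S, r i = fS G D S

lemma tight_union_inter (G : SimpleGraph V) [DecidableRel G.Adj] (D : V → ℝ)
    {r : V → ℝ} (hD : ∀ i, 0 < D i) (hr : r ∈ polyA (fS G D))
    {S T : Finset V} (hS : Tight G D r S) (hT : Tight G D r T) :
    Tight G D r (S ∪ T) ∧ Tight G D r (S ∩ T) := by
  have hsum : ∑ i ∈ S ∪ T, r i + ∑ i ∈ S ∩ T, r i = ∑ i ∈ S, r i + ∑ i ∈ T, r i :=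
    Finset.sum_union_inter
  have hsub := fS_submodular G D hD S T
  have h1 : ∑ i ∈ S ∪ T, r i ≤ fS G D (S ∪ T) := hr.2 _
  have h2 : ∑ i ∈ S ∩ T, r i ≤ fS G D (S ∩ T) := hr.2 _
  rw [Tight] at hS hT ⊢
  rw [Tight]
  constructor <;> linarith

lemma exists_tight (G : SimpleGraph V) [DecidableRel G.Adj] (D : V → ℝ) (hD : ∀ i, 0 < D i)
    (rstar : V → ℝ) (hlex : LexOptimal (polyA (fS G D)) D rstar) (i0 : V) :
    ∃ S : Finset V, i0 ∈ S ∧ Tight G D rstar S ∧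
      ∀ j ∈ S, rstar j / D j ≤ rstar i0 / D i0 := by
  have hrA : rstar ∈ polyA (fS G D) := hlex.1
  have hopt := hlex.2
  have hr0 : ∀ i, 0 ≤ rstar i := hrA.1
  have hrle : ∀ S : Finset V, ∑ i ∈ S, rstar i ≤ fS G D S := hrA.2
  -- Step 1: there is a tight set containing i0
  have hstep1 : ∃ S : Finset V, i0 ∈ S ∧ Tight G D rstar S := by
    by_contra hno
    push_neg at hno
    have hslack : ∀ T : Finset V, i0 ∈ T → ∑ i ∈ T, rstar i < fS G D T := by
      intro T hT
      exact lt_of_le_of_ne (hrle T) (hno T hT)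
    obtain ⟨T0, hT0mem, hT0min⟩ := Finset.exists_min_image
      (Finset.univ.powerset.filter (fun T => i0 ∈ T))
      (fun T => fS G D T - ∑ i ∈ T, rstar i)
      ⟨{i0}, by simp⟩
    have hT0i : i0 ∈ T0 := (Finset.mem_filter.1 hT0mem).2
    set ε := fS G D T0 - ∑ i ∈ T0, rstar i with hεdef
    have hεpos : 0 < ε := sub_pos.2 (hslack T0 hT0i)
    set r' : V → ℝ := fun i => if i = i0 then rstar i + ε else rstar i with hr'def
    have hsum : ∀ S : Finset V, ∑ i ∈ S, r' i
        = ∑ i ∈ S, rstar i + (if i0 ∈ S then ε else 0) := by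
      intro S
      have hfun : ∀ i ∈ S, r' i = rstar i + (if i = i0 then ε else 0) := by
        intro i _
        by_cases h : i = i0 <;> simp [hr'def, h]
      rw [Finset.sum_congr rfl hfun, Finset.sum_add_distrib,
        Finset.sum_ite_eq' S i0 (fun _ => ε)]
    have hge : ∀ i, rstar i ≤ r' i := by
      intro i
      by_cases h : i = i0
      · simp only [hr'def, if_pos h]; linarith
      · simp only [hr'def, if_neg h]
        exact le_refl _
    have hr'A : r' ∈ polyA (fS G D) := by
      constructor
      · intro i; exact le_trans (hr0 i) (hge i)
      · intro S
        rw [hsum S]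
        by_cases hS : i0 ∈ S
        · rw [if_pos hS]
          have hmin := hT0min S (Finset.mem_filter.2
            ⟨Finset.mem_powerset.2 (Finset.subset_univ S), hS⟩)
          linarith
        · rw [if_neg hS, add_zero]; exact hrle S
    have hstrict : rstar i0 / D i0 < r' i0 / D i0 := by
      simp only [hr'def, if_pos rfl]
      exact (div_lt_div_iff_of_pos_right (hD i0)).2 (by linarith)
    apply not_lexGE_of_cnt (fun i => rstar i / D i) (fun i => r' i / D i) (hopt r' hr'A)
    · refine ⟨rstar i0 / D i0, ?_⟩
      apply Finset.card_lt_card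
      have hsub : (Finset.univ.filter fun i => r' i / D i ≤ rstar i0 / D i0)
          ⊆ (Finset.univ.filter fun i => rstar i / D i ≤ rstar i0 / D i0) := by
        intro i hi
        rw [Finset.mem_filter] at hi ⊢
        refine ⟨Finset.mem_univ _, le_trans ?_ hi.2⟩
        exact (div_le_div_iff_of_pos_right (hD i)).2 (hge i)
      rw [Finset.ssubset_iff_of_subset hsub]
      refine ⟨i0, Finset.mem_filter.2 ⟨Finset.mem_univ _, le_refl _⟩, ?_⟩
      intro hmem
      rw [Finset.mem_filter] at hmem
      linarith [hmem.2, hstrict]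
    · intro t
      left
      apply Finset.card_le_card
      intro i hi
      rw [Finset.mem_filter] at hi ⊢
      refine ⟨Finset.mem_univ _, le_trans ?_ hi.2⟩
      exact (div_le_div_iff_of_pos_right (hD i)).2 (hge i)
  -- Step 2: minimal tight set containing i0
  obtain ⟨M, hMmem, hMmin⟩ := Finset.exists_min_image
    (Finset.univ.powerset.filter (fun T => i0 ∈ T ∧ Tight G D rstar T))
    (fun T => T.card)
    (by
      obtain ⟨S1, hS1i, hS1t⟩ := hstep1
      exact ⟨S1, Finset.mem_filter.2 ⟨Finset.mem_powerset.2 (Finset.subset_univ S1),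
        hS1i, hS1t⟩⟩)
  have hMi0 : i0 ∈ M := (Finset.mem_filter.1 hMmem).2.1
  have hMt : Tight G D rstar M := (Finset.mem_filter.1 hMmem).2.2
  have hMsub : ∀ T : Finset V, i0 ∈ T → Tight G D rstar T → M ⊆ T := by
    intro T hTi hTt
    have hint : Tight G D rstar (M ∩ T) := (tight_union_inter G D hD hrA hMt hTt).2
    have hmem2 : M ∩ T ∈ Finset.univ.powerset.filter
        (fun T' => i0 ∈ T' ∧ Tight G D rstar T') :=
      Finset.mem_filter.2 ⟨Finset.mem_powerset.2 (Finset.subset_univ _),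
        Finset.mem_inter.2 ⟨hMi0, hTi⟩, hint⟩
    have hcard := hMmin _ hmem2
    have hsub' : M ∩ T ⊆ M := Finset.inter_subset_left
    have heq : M ∩ T = M := Finset.eq_of_subset_of_card_le hsub' hcard
    intro x hx
    rw [← heq] at hx
    exact (Finset.mem_inter.1 hx).2
  by_cases hall : ∀ j ∈ M, rstar j / D j ≤ rstar i0 / D i0
  · exact ⟨M, hMi0, hMt, hall⟩
  exfalso
  push_neg at hall
  obtain ⟨j0, hj0M, hj0gt⟩ := hall
  have hij : i0 ≠ j0 := by rintro rfl; exact lt_irrefl _ hj0gt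
  have hslackH : ∀ T : Finset V, i0 ∈ T → j0 ∉ T → ∑ i ∈ T, rstar i < fS G D T := by
    intro T hTi hTj
    rcases lt_or_eq_of_le (hrle T) with h | h
    · exact h
    · exact absurd ((hMsub T hTi h) hj0M) hTj
  obtain ⟨T0, hT0mem, hT0min⟩ := Finset.exists_min_image
    (Finset.univ.powerset.filter (fun T => i0 ∈ T ∧ j0 ∉ T))
    (fun T => fS G D T - ∑ i ∈ T, rstar i)
    ⟨{i0}, by simp [Ne.symm hij]⟩
  have hT0i : i0 ∈ T0 := (Finset.mem_filter.1 hT0mem).2.1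
  have hT0j : j0 ∉ T0 := (Finset.mem_filter.1 hT0mem).2.2
  set ε0 := fS G D T0 - ∑ i ∈ T0, rstar i with hε0def
  have hε0pos : 0 < ε0 := sub_pos.2 (hslackH T0 hT0i hT0j)
  have hden : 0 < 1 / D i0 + 1 / D j0 := by
    have h1 := hD i0
    have h2 := hD j0
    positivity
  set c := (rstar j0 / D j0 - rstar i0 / D i0) / (1 / D i0 + 1 / D j0) with hcdef
  have hcpos : 0 < c := div_pos (sub_pos.2 hj0gt) hden
  have hrj0pos : 0 < rstar j0 := by
    have h1 : 0 ≤ rstar i0 / D i0 := div_nonneg (hr0 i0) (hD i0).le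
    have h2 : 0 < rstar j0 / D j0 := lt_of_le_of_lt h1 hj0gt
    have h3 : rstar j0 / D j0 * D j0 = rstar j0 := div_mul_cancel₀ _ (ne_of_gt (hD j0))
    nlinarith [mul_pos h2 (hD j0)]
  set ε := min ε0 (min c (rstar j0)) with hεdef
  have hεpos : 0 < ε := lt_min hε0pos (lt_min hcpos hrj0pos)
  have hεε0 : ε ≤ ε0 := min_le_left _ _
  have hεc : ε ≤ c := le_trans (min_le_right _ _) (min_le_left _ _)
  have hεrj : ε ≤ rstar j0 := le_trans (min_le_right _ _) (min_le_right _ _)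
  set r' : V → ℝ := fun i => if i = i0 then rstar i + ε
    else if i = j0 then rstar i - ε else rstar i with hr'def
  have hsum : ∀ S : Finset V, ∑ i ∈ S, r' i = ∑ i ∈ S, rstar i
      + (if i0 ∈ S then ε else 0) - (if j0 ∈ S then ε else 0) := by
    intro S
    have hfun : ∀ i ∈ S, r' i = rstar i + (if i = i0 then ε else 0)
        - (if i = j0 then ε else 0) := by
      intro i _
      by_cases h1 : i = i0
      · subst h1
        rw [if_pos rfl, if_neg hij]
        simp only [hr'def, if_pos rfl]
        ring
      · by_cases h2 : i = j0
        · subst h2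
          simp [hr'def, h1]
        · simp [hr'def, h1, h2]
    rw [Finset.sum_congr rfl hfun, Finset.sum_sub_distrib, Finset.sum_add_distrib,
      Finset.sum_ite_eq' S i0 (fun _ => ε), Finset.sum_ite_eq' S j0 (fun _ => ε)]
  have hr'A : r' ∈ polyA (fS G D) := by
    constructor
    · intro i
      by_cases h1 : i = i0
      · simp only [hr'def, if_pos h1]
        linarith [hr0 i]
      · by_cases h2 : i = j0
        · have hval : r' i = rstar i - ε := by simp [hr'def, h1, h2, Ne.symm hij]
          rw [hval]
          rw [h2]
          linarith
        · simp only [hr'def, if_neg h1, if_neg h2]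
          exact hr0 i
    · intro S
      rw [hsum S]
      by_cases h1 : i0 ∈ S <;> by_cases h2 : j0 ∈ S
      · rw [if_pos h1, if_pos h2]
        have := hrle S
        linarith
      · rw [if_pos h1, if_neg h2]
        have hmem : S ∈ Finset.univ.powerset.filter (fun T => i0 ∈ T ∧ j0 ∉ T) :=
          Finset.mem_filter.2 ⟨Finset.mem_powerset.2 (Finset.subset_univ S), h1, h2⟩
        have := hT0min S hmem
        linarith
      · rw [if_neg h1, if_pos h2]
        have := hrle S
        linarith
      · rw [if_neg h1, if_neg h2]
        have := hrle S
        linarith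
  have hyi0 : r' i0 / D i0 = rstar i0 / D i0 + ε / D i0 := by
    have hval : r' i0 = rstar i0 + ε := by simp [hr'def]
    rw [hval, add_div]
  have hyj0 : r' j0 / D j0 = rstar j0 / D j0 - ε / D j0 := by
    have hval : r' j0 = rstar j0 - ε := by simp [hr'def, Ne.symm hij]
    rw [hval, sub_div]
  have hyother : ∀ i, i ≠ i0 → i ≠ j0 → r' i = rstar i := by
    intro i h1 h2
    simp only [hr'def, if_neg h1, if_neg h2]
  have hkey : rstar i0 / D i0 + ε / D i0 ≤ rstar j0 / D j0 - ε / D j0 := by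
    have hmul : ε * (1 / D i0 + 1 / D j0) ≤ c * (1 / D i0 + 1 / D j0) :=
      mul_le_mul_of_nonneg_right hεc hden.le
    have hcval : c * (1 / D i0 + 1 / D j0) = rstar j0 / D j0 - rstar i0 / D i0 :=
      div_mul_cancel₀ _ (ne_of_gt hden)
    have hexpand : ε * (1 / D i0 + 1 / D j0) = ε / D i0 + ε / D j0 := by ring
    linarith
  have hposdiv : 0 < ε / D i0 := div_pos hεpos (hD i0)
  have hstrict : rstar i0 / D i0 < rstar i0 / D i0 + ε / D i0 := by linarith
  have hcnt1 : (Finset.univ.filter fun i => r' i / D i ≤ rstar i0 / D i0).card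
      < (Finset.univ.filter fun i => rstar i / D i ≤ rstar i0 / D i0).card := by
    apply Finset.card_lt_card
    have hsub : (Finset.univ.filter fun i => r' i / D i ≤ rstar i0 / D i0)
        ⊆ (Finset.univ.filter fun i => rstar i / D i ≤ rstar i0 / D i0) := by
      intro i hi
      rw [Finset.mem_filter] at hi ⊢
      refine ⟨Finset.mem_univ _, ?_⟩
      rcases eq_or_ne i i0 with rfl | h1
      · exfalso
        rw [hyi0] at hi
        linarith [hi.2]
      rcases eq_or_ne i j0 with rfl | h2
      · exfalso
        rw [hyj0] at hi
        linarith [hi.2, hkey, hstrict]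
      · rw [hyother i h1 h2] at hi
        exact hi.2
    rw [Finset.ssubset_iff_of_subset hsub]
    refine ⟨i0, Finset.mem_filter.2 ⟨Finset.mem_univ _, le_refl _⟩, ?_⟩
    intro hmem
    rw [Finset.mem_filter, hyi0] at hmem
    linarith [hmem.2]
  apply not_lexGE_of_cnt (fun i => rstar i / D i) (fun i => r' i / D i) (hopt r' hr'A)
  · exact ⟨rstar i0 / D i0, hcnt1⟩
  · intro t
    by_cases ht : t < rstar j0 / D j0 - ε / D j0
    · left
      apply Finset.card_le_card
      intro i hi
      simp only [Finset.mem_filter] at hi ⊢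
      refine ⟨Finset.mem_univ _, ?_⟩
      rcases eq_or_ne i i0 with rfl | h1
      · rw [hyi0] at hi
        linarith [hi.2]
      rcases eq_or_ne i j0 with rfl | h2
      · exfalso
        rw [hyj0] at hi
        linarith [hi.2]
      · rw [hyother i h1 h2] at hi
        exact hi.2
    · right
      push_neg at ht
      exact ⟨rstar i0 / D i0, by linarith, hcnt1⟩

lemma exists_tight_superset (G : SimpleGraph V) [DecidableRel G.Adj] (D : V → ℝ)
    (hD : ∀ i, 0 < D i) (rstar : V → ℝ) (hlex : LexOptimal (polyA (fS G D)) D rstar)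
    (U : Finset V) :
    ∃ W : Finset V, U ⊆ W ∧ Tight G D rstar W ∧
      ∀ j ∈ W, ∃ i ∈ U, rstar j / D j ≤ rstar i / D i := by
  induction U using Finset.induction_on with
  | empty =>
    refine ⟨∅, le_refl _, ?_, by simp⟩
    rw [Tight, Finset.sum_empty, fS_empty]
  | @insert a U ha ih =>
    obtain ⟨W, hUW, hWt, hWb⟩ := ih
    obtain ⟨S, haS, hSt, hSb⟩ := exists_tight G D hD rstar hlex a
    refine ⟨W ∪ S, ?_, (tight_union_inter G D hD hlex.1 hWt hSt).1, ?_⟩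
    · intro i hi
      rcases Finset.mem_insert.1 hi with rfl | hi
      · exact Finset.mem_union_right _ haS
      · exact Finset.mem_union_left _ (hUW hi)
    · intro j hj
      rcases Finset.mem_union.1 hj with hj | hj
      · obtain ⟨i, hiU, hle⟩ := hWb j hj
        exact ⟨i, Finset.mem_insert_of_mem hiU, hle⟩
      · exact ⟨a, Finset.mem_insert_self _ _, hSb j hj⟩

lemma abel_ineq (γ z : V → ℝ)
    (h0 : ∀ t : ℝ, ∑ i ∈ Finset.univ.filter (fun i => γ i ≤ t), z i ≤ 0)
    (hz : ∑ i, z i = 0) : 0 ≤ ∑ i, γ i * z i := by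
  suffices H : ∀ n : ℕ, ∀ γ : V → ℝ, (Finset.univ.image γ).card ≤ n →
      (∀ t : ℝ, ∑ i ∈ Finset.univ.filter (fun i => γ i ≤ t), z i ≤ 0) →
      0 ≤ ∑ i, γ i * z i by
    exact H _ γ le_rfl h0
  intro n
  induction n with
  | zero =>
    intro γ hcard _
    have : (Finset.univ.image γ) = ∅ := Finset.card_eq_zero.1 (Nat.le_zero.1 hcard)
    have huniv : (Finset.univ : Finset V) = ∅ := Finset.image_eq_empty.1 this
    rw [huniv, Finset.sum_empty]
  | succ n ih =>
    intro γ hcard h0'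
    by_cases hne : (Finset.univ.image γ).Nonempty
    · set m := (Finset.univ.image γ).min' hne with hm
      have hmin : ∀ i : V, m ≤ γ i := fun i =>
        Finset.min'_le _ _ (Finset.mem_image_of_mem γ (Finset.mem_univ i))
      by_cases herase : ((Finset.univ.image γ).erase m) = ∅
      · -- all values equal m
        have hall : ∀ i : V, γ i = m := by
          intro i
          by_contra hne'
          have : γ i ∈ (Finset.univ.image γ).erase m :=
            Finset.mem_erase.2 ⟨hne', Finset.mem_image_of_mem γ (Finset.mem_univ i)⟩
          rw [herase] at this
          exact absurd this (Finset.notMem_empty _)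
        have : ∑ i, γ i * z i = m * ∑ i, z i := by
          rw [Finset.mul_sum]
          exact Finset.sum_congr rfl (fun i _ => by rw [hall i])
        rw [this, hz, mul_zero]
      · have hne2 : ((Finset.univ.image γ).erase m).Nonempty :=
          Finset.nonempty_of_ne_empty herase
        set m' := ((Finset.univ.image γ).erase m).min' hne2 with hm'
        have hm'mem : m' ∈ (Finset.univ.image γ).erase m := Finset.min'_mem _ _
        have hmm' : m < m' := by
          rcases Finset.mem_erase.1 hm'mem with ⟨hne', hmem⟩
          exact lt_of_le_of_ne (Finset.min'_le _ _ hmem) (Ne.symm hne')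
        have hge' : ∀ i : V, γ i ≠ m → m' ≤ γ i := by
          intro i hne'
          exact Finset.min'_le _ _ (Finset.mem_erase.2
            ⟨hne', Finset.mem_image_of_mem γ (Finset.mem_univ i)⟩)
        set γ' : V → ℝ := fun i => if γ i = m then m' else γ i with hγ'
        have hγ'ge : ∀ i, m' ≤ γ' i := by
          intro i
          by_cases h : γ i = m <;> simp [hγ', h]
          exact hge' i h
        -- card bound
        have hsub : Finset.univ.image γ' ⊆ (Finset.univ.image γ).erase m := by
          intro a ha
          obtain ⟨i, _, rfl⟩ := Finset.mem_image.1 ha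
          by_cases h : γ i = m
          · simpa [hγ', h] using hm'mem
          · simp only [hγ', h, if_false]
            exact Finset.mem_erase.2 ⟨h, Finset.mem_image_of_mem γ (Finset.mem_univ i)⟩
        have hcard' : (Finset.univ.image γ').card ≤ n := by
          have h1 := Finset.card_le_card hsub
          have h2 : ((Finset.univ.image γ).erase m).card = (Finset.univ.image γ).card - 1 :=
            Finset.card_erase_of_mem (Finset.min'_mem _ _)
          omega
        -- h0 for γ'
        have h0'' : ∀ t : ℝ, ∑ i ∈ Finset.univ.filter (fun i => γ' i ≤ t), z i ≤ 0 := by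
          intro t
          by_cases ht : t < m'
          · have : Finset.univ.filter (fun i => γ' i ≤ t) = ∅ := by
              apply Finset.filter_eq_empty_iff.2
              intro i _
              push_neg
              exact lt_of_lt_of_le ht (hγ'ge i)
            rw [this, Finset.sum_empty]
          · push_neg at ht
            have : Finset.univ.filter (fun i => γ' i ≤ t) =
                Finset.univ.filter (fun i => γ i ≤ t) := by
              apply Finset.filter_congr
              intro i _
              by_cases h : γ i = m
              · simp only [hγ', h, if_true]
                constructor
                · intro _; exact le_trans hmm'.le ht
                · intro _; exact ht
              · simp [hγ', h]
            rw [this]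
            exact h0' t
        have hIH := ih γ' hcard' h0''
        -- compare the two sums
        have hdiff : ∑ i, γ' i * z i - ∑ i, γ i * z i
            = (m' - m) * ∑ i ∈ Finset.univ.filter (fun i => γ i ≤ m), z i := by
          rw [← Finset.sum_sub_distrib]
          have : ∀ i ∈ (Finset.univ : Finset V), γ' i * z i - γ i * z i =
              if γ i ≤ m then (m' - m) * z i else 0 := by
            intro i _
            by_cases h : γ i = m
            · rw [if_pos (le_of_eq h)]
              simp only [hγ', h, if_true]
              ring
            · have : ¬ γ i ≤ m := by
                intro hle
                exact h (le_antisymm hle (hmin i))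
              simp [hγ', h, this]
            
          rw [Finset.sum_congr rfl this, Finset.sum_ite, Finset.sum_const_zero, add_zero,
            Finset.mul_sum]
        have hLz : ∑ i ∈ Finset.univ.filter (fun i => γ i ≤ m), z i ≤ 0 := h0' m
        nlinarith [hIH, hdiff, hLz, hmm']
    · rw [Finset.not_nonempty_iff_eq_empty] at hne
      have huniv : (Finset.univ : Finset V) = ∅ := Finset.image_eq_empty.1 hne
      rw [huniv, Finset.sum_empty]

end Aux


/-- second Lyapunov inequality: if `r*` is lex-optimal and `J ∈ A₀`, then
`Σ_i (1/D_i) r*_i (J_i − r*_i) ≥ 0`. -/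
theorem lyapunov_second_inequality {V : Type*} [Fintype V] [DecidableEq V]
    (G : SimpleGraph V) [DecidableRel G.Adj]
    (hconn : G.Connected) (hniso : ∀ i, (G.neighborFinset i).Nonempty)
    (D : V → ℝ) (hD : ∀ i, 0 < D i)
    (rstar : V → ℝ) (hlex : LexOptimal (polyA (fS G D)) D rstar)
    (J : V → ℝ) (hJ : J ∈ polyBase (fS G D)) :
    0 ≤ ∑ i, (1 / D i) * rstar i * (J i - rstar i) := by
  have hrA : rstar ∈ polyA (fS G D) := hlex.1
  have htight : ∀ t : ℝ,
      Tight G D rstar (Finset.univ.filter (fun i => rstar i / D i ≤ t)) := by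
    intro t
    obtain ⟨W, hUW, hWt, hWb⟩ :=
      exists_tight_superset G D hD rstar hlex (Finset.univ.filter (fun i => rstar i / D i ≤ t))
    have hWU : W = Finset.univ.filter (fun i => rstar i / D i ≤ t) := by
      apply Finset.Subset.antisymm _ hUW
      intro j hj
      obtain ⟨i, hiU, hle⟩ := hWb j hj
      have hit : rstar i / D i ≤ t := (Finset.mem_filter.1 hiU).2
      exact Finset.mem_filter.2 ⟨Finset.mem_univ _, le_trans hle hit⟩
    rw [← hWU]
    exact hWt
  have huniv : Tight G D rstar Finset.univ := by
    obtain ⟨W, hUW, hWt, _⟩ := exists_tight_superset G D hD rstar hlex Finset.univ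
    have : W = Finset.univ := Finset.univ_subset_iff.1 hUW
    rwa [this] at hWt
  have hgoal : ∑ i, (1 / D i) * rstar i * (J i - rstar i)
      = ∑ i, (rstar i / D i) * (J i - rstar i) := by
    apply Finset.sum_congr rfl
    intro i _
    rw [div_eq_mul_inv]
    ring
  rw [hgoal]
  apply abel_ineq (fun i => rstar i / D i) (fun i => J i - rstar i)
  · intro t
    have h1 : ∑ i ∈ Finset.univ.filter (fun i => rstar i / D i ≤ t), J i
        ≤ fS G D (Finset.univ.filter (fun i => rstar i / D i ≤ t)) := hJ.1.2 _
    have h2 := htight t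
    rw [Tight] at h2
    rw [Finset.sum_sub_distrib]
    linarith
  · have h2 := huniv
    rw [Tight] at h2
    rw [Finset.sum_sub_distrib, hJ.2, h2, sub_self]

end SharingEcon
end
end

section
/- Robbins–Siegmund almost-sure convergence theorem: on a probability space (Ω, F, P) equipped with a filtration F_1 ⊆ F_2 ⊆ ⋯ ⊆ F, let z_t, ξ_t, ζ_t (t = 1,2,…) be nonnegative, integrable, F_t-measurable random variables such that E[z_{t+1} | F_t] ≤ z_t − ζ_t + ξ_t for every t, and Σ_{t=1}^{∞} ξ_t < ∞ almost surely. Then almost surely lim_{t→∞} z_t exists and is finite, and Σ_{t=1}^{∞} ζ_t < ∞. -/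
open MeasureTheory Filter

section Aux

variable {Ω : Type*} {m0 : MeasurableSpace Ω} {μ : Measure Ω} {ℱ : Filtration ℕ m0}
  {f u : ℕ → Ω → ℝ} {r : ℝ}

theorem RS.hitting_eq_min (u : ℕ → Ω → ℝ) (π : Ω → ℕ) (r : ℝ) (ω : Ω) {n : ℕ}
    (hπn : ∀ ω, π ω ≤ n) :
    hittingBtwn u (Set.Ici r) 0 (π ω) ω = min (π ω) (hittingBtwn u (Set.Ici r) 0 n ω) := by
  classical
  refine le_antisymm (le_min (hittingBtwn_le _) (hittingBtwn_apply_mono_right u _ _ ω (hπn ω))) ?_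
  by_cases hle : π ω ≤ hittingBtwn u (Set.Ici r) 0 n ω
  · rw [min_eq_left hle]
    by_cases h : ∃ j ∈ Set.Icc 0 (π ω), u j ω ∈ Set.Ici r
    · refine hle.trans (Eq.le ?_)
      rw [← hittingBtwn_eq_hittingBtwn_of_exists (hπn ω) h]
    · simp only [hittingBtwn, if_neg h, le_rfl]
  · rw [min_eq_right (not_le.1 hle).le,
      ← hittingBtwn_eq_hittingBtwn_of_exists (hπn ω) _]
    rw [not_le, hittingBtwn_lt_iff _ (hπn ω)] at hle
    exact
      let ⟨j, hj₁, hj₂⟩ := hle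
      ⟨j, ⟨hj₁.1, hj₁.2.le⟩, hj₂⟩

theorem RS.stoppedValue_stoppedValue_hitting (f u : ℕ → Ω → ℝ) (π : Ω → WithTop ℕ) (r : ℝ) {n : ℕ}
    (hπn : ∀ ω, π ω ≤ n) :
    stoppedValue (fun i => stoppedValue f (fun ω => ((hittingBtwn u (Set.Ici r) 0 i ω : ℕ) : WithTop ℕ))) π =
      stoppedValue f (fun ω => min (π ω) ((hittingBtwn u (Set.Ici r) 0 n ω : ℕ) : WithTop ℕ)) := by
  ext1 ω
  obtain ⟨p, hp⟩ := WithTop.ne_top_iff_exists.mp (ne_top_of_le_ne_top WithTop.coe_ne_top (hπn ω))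
  have hpn : p ≤ n := by have := hπn ω; rw [← hp] at this; exact WithTop.coe_le_coe.mp this
  simp only [stoppedValue, ← hp]
  show f (hittingBtwn u (Set.Ici r) 0 p ω) ω = _
  rw [RS.hitting_eq_min _ (fun _ => p) _ ω (fun _ => hpn)]
  simp only [min_def]
  split_ifs with h1 h2 h2
  · rfl
  · exact absurd (WithTop.coe_le_coe.mpr h1) h2
  · exact absurd (WithTop.coe_le_coe.mp h2) h1
  · rfl

theorem RS.submartingale_stoppedValue_hitting [IsFiniteMeasure μ]
    (hf : Submartingale f ℱ μ) (hu : Adapted ℱ u) (r : ℝ) :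
    Submartingale (fun i => stoppedValue f (fun ω => ((hittingBtwn u (Set.Ici r) 0 i ω : ℕ) : WithTop ℕ))) ℱ μ := by
  have hst : ∀ i : ℕ, IsStoppingTime ℱ (fun ω => ((hittingBtwn u (Set.Ici r) 0 i ω : ℕ) : WithTop ℕ)) := fun i =>
    hu.isStoppingTime_hittingBtwn measurableSet_Ici
  rw [submartingale_iff_expected_stoppedValue_mono]
  · intro σ π hσ hπ hσ_le_π hπ_bdd
    obtain ⟨n, hπ_le_n⟩ := hπ_bdd
    simp_rw [RS.stoppedValue_stoppedValue_hitting f u σ r fun i => (hσ_le_π i).trans (hπ_le_n i)]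
    simp_rw [RS.stoppedValue_stoppedValue_hitting f u π r hπ_le_n]
    refine hf.expected_stoppedValue_mono ?_ ?_ ?_ fun ω => (min_le_left _ _).trans (hπ_le_n ω)
    · exact hσ.min (hst n)
    · exact hπ.min (hst n)
    · exact fun ω => min_le_min (hσ_le_π ω) le_rfl
  · exact fun i => stronglyMeasurable_stoppedValue_of_le
      hf.stronglyAdapted.progMeasurable_of_discrete (hst i) fun ω => WithTop.coe_le_coe.mpr (hittingBtwn_le ω)
  · exact fun i => integrable_stoppedValue _ (hst i) hf.integrable fun ω => WithTop.coe_le_coe.mpr (hittingBtwn_le ω)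

end Aux

/-- Robbins–Siegmund: on a probability space with a filtration `ℱ`, if `z, ξ, ζ`
are nonnegative integrable `ℱ t`-measurable processes with
`E[z (t+1) | ℱ t] ≤ z t − ζ t + ξ t` for all `t`, and `Σ_t ξ t < ∞` a.s., then a.s.
`lim_t z t` exists (is finite) and `Σ_t ζ t < ∞`. -/
theorem robbins_siegmund
    {Ω : Type*} {m0 : MeasurableSpace Ω} {μ : Measure Ω} [IsProbabilityMeasure μ]
    (ℱ : Filtration ℕ m0)
    (z ξ ζ : ℕ → Ω → ℝ)
    (hz_nonneg : ∀ t ω, 0 ≤ z t ω)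
    (hξ_nonneg : ∀ t ω, 0 ≤ ξ t ω)
    (hζ_nonneg : ∀ t ω, 0 ≤ ζ t ω)
    (hz_meas : ∀ t, StronglyMeasurable[ℱ t] (z t))
    (hξ_meas : ∀ t, StronglyMeasurable[ℱ t] (ξ t))
    (hζ_meas : ∀ t, StronglyMeasurable[ℱ t] (ζ t))
    (hz_int : ∀ t, Integrable (z t) μ)
    (hξ_int : ∀ t, Integrable (ξ t) μ)
    (hζ_int : ∀ t, Integrable (ζ t) μ)
    (hdrift : ∀ t, μ[z (t + 1)|ℱ t] ≤ᵐ[μ] fun ω => z t ω - ζ t ω + ξ t ω)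
    (hξ_sum : ∀ᵐ ω ∂μ, Summable fun t => ξ t ω) :
    ∀ᵐ ω ∂μ, (∃ L : ℝ, Tendsto (fun t => z t ω) atTop (nhds L)) ∧
      Summable fun t => ζ t ω := by
  classical
  -- partial sums
  set S : ℕ → Ω → ℝ := fun t ω => ∑ s ∈ Finset.range t, ξ s ω with hS
  set T : ℕ → Ω → ℝ := fun t ω => ∑ s ∈ Finset.range t, ζ s ω with hT
  -- measurability and integrability of partial sums
  have hS_meas : ∀ t, StronglyMeasurable[ℱ t] (S (t + 1)) := by
    intro t
    apply Finset.stronglyMeasurable_fun_sum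
    intro s hs
    exact (hξ_meas s).mono (ℱ.mono (Nat.lt_succ_iff.mp (Finset.mem_range.mp hs)))
  have hT_meas : ∀ t, StronglyMeasurable[ℱ t] (T (t + 1)) := by
    intro t
    apply Finset.stronglyMeasurable_fun_sum
    intro s hs
    exact (hζ_meas s).mono (ℱ.mono (Nat.lt_succ_iff.mp (Finset.mem_range.mp hs)))
  have hS_int : ∀ t, Integrable (S t) μ := fun t =>
    integrable_finset_sum _ fun s _ => hξ_int s
  have hT_int : ∀ t, Integrable (T t) μ := fun t =>
    integrable_finset_sum _ fun s _ => hζ_int s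
  -- the supermartingale
  set M : ℕ → Ω → ℝ := fun t ω => z t ω - S t ω + T t ω with hM
  have hM_meas : ∀ t, StronglyMeasurable[ℱ t] (M t) := by
    intro t
    refine ((hz_meas t).sub ?_).add ?_
    · cases t with
      | zero => simpa [hS] using stronglyMeasurable_const
      | succ n => exact (hS_meas n).mono (ℱ.mono n.le_succ)
    · cases t with
      | zero => simpa [hT] using stronglyMeasurable_const
      | succ n => exact (hT_meas n).mono (ℱ.mono n.le_succ)
  have hM_int : ∀ t, Integrable (M t) μ := fun t =>
    ((hz_int t).sub (hS_int t)).add (hT_int t)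
  have hMsuper : Supermartingale M ℱ μ := by
    refine supermartingale_nat (fun t => hM_meas t) hM_int fun t => ?_
    set g : Ω → ℝ := fun ω => T (t + 1) ω - S (t + 1) ω with hg
    have hg_meas : StronglyMeasurable[ℱ t] g := (hT_meas t).sub (hS_meas t)
    have hg_int : Integrable g μ := (hT_int (t + 1)).sub (hS_int (t + 1))
    have hMeq : M (t + 1) = fun ω => z (t + 1) ω + g ω := by
      ext ω; simp [hM, hg]; ring
    have h1 : μ[M (t + 1)|ℱ t] =ᵐ[μ] fun ω => (μ[z (t + 1)|ℱ t]) ω + g ω := by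
      rw [hMeq]
      refine (condExp_add (hz_int (t + 1)) hg_int _).trans ?_
      have := condExp_of_stronglyMeasurable (ℱ.le t) hg_meas hg_int
      filter_upwards [] with ω
      simp [this]
    refine h1.le.trans ?_
    filter_upwards [hdrift t] with ω hω
    have : (μ[z (t + 1)|ℱ t]) ω + g ω ≤ (z t ω - ζ t ω + ξ t ω) + g ω := by linarith
    refine this.trans ?_
    simp only [hg, hS, hT, hM, Finset.sum_range_succ]
    ring_nf
    exact le_of_eq (by ring)
  -- the submartingale f = -M
  set f : ℕ → Ω → ℝ := fun t ω => -(M t ω) with hf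
  have hfsub : Submartingale f ℱ μ := hMsuper.neg
  set u : ℕ → Ω → ℝ := fun t ω => S (t + 1) ω with hu
  have hu_adp : Adapted ℱ u := fun t => (hS_meas t).measurable
  set c : ℝ := ∫ ω, z 0 ω ∂μ with hc
  have hc_nonneg : 0 ≤ c := integral_nonneg fun ω => hz_nonneg 0 ω
  -- stopped processes converge a.s.
  have key : ∀ i : ℕ, ∀ᵐ ω ∂μ,
      ∃ l, Tendsto (fun n => stoppedValue f (fun ω => ((hittingBtwn u (Set.Ici (i : ℝ)) 0 n ω : ℕ) : WithTop ℕ)) ω) atTop (nhds l) := by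
    intro i
    set h : ℕ → Ω → ℝ := fun n => stoppedValue f (fun ω => ((hittingBtwn u (Set.Ici (i : ℝ)) 0 n ω : ℕ) : WithTop ℕ)) with hh
    have hsubm : Submartingale h ℱ μ := RS.submartingale_stoppedValue_hitting hfsub hu_adp _
    -- pointwise upper bound : h n ω ≤ i
    have hle : ∀ n ω, h n ω ≤ (i : ℝ) := by
      intro n ω
      set j := hittingBtwn u (Set.Ici (i : ℝ)) 0 n ω with hj
      have hfle : f j ω ≤ S j ω := by
        simp only [hf, hM]
        have := hz_nonneg j ω
        have h2 : 0 ≤ T j ω := Finset.sum_nonneg fun s _ => hζ_nonneg s ω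
        linarith
      have : S j ω ≤ (i : ℝ) := by
        cases hjj : j with
        | zero => simpa [hS] using (i : ℝ).natCast_nonneg
        | succ k =>
          have hk : k < hittingBtwn u (Set.Ici (i : ℝ)) 0 n ω := by rw [← hj, hjj]; exact k.lt_succ_self
          have := notMem_of_lt_hittingBtwn hk (Nat.zero_le k)
          simp only [Set.mem_Ici, not_le] at this
          exact le_of_lt (by simpa [hu] using this)
      exact hfle.trans this
    -- integral lower bound
    have h0 : h 0 = fun ω => -(z 0 ω) := by
      ext ω
      simp [hh, stoppedValue, hittingBtwn_of_le le_rfl, hf, hM, hS, hT]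
    have hint_lb : ∀ n, (0 : ℝ) ≤ ∫ ω, (h n ω + c) ∂μ := by
      intro n
      have h1 : ∫ ω, h 0 ω ∂μ ≤ ∫ ω, h n ω ∂μ := by
        have := hsubm.setIntegral_le (Nat.zero_le n) (MeasurableSet.univ)
        simpa [setIntegral_univ] using this
      have h2 : ∫ ω, h 0 ω ∂μ = -c := by
        rw [h0, hc]; simp [integral_neg]
      rw [integral_add (hsubm.integrable n) (integrable_const c)]
      simp only [integral_const, measure_univ, probReal_univ, ENNReal.toReal_one, one_smul, smul_eq_mul]
      linarith
    -- the shifted process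
    set h' : ℕ → Ω → ℝ := fun n ω => h n ω + c with hh'
    have hsubm' : Submartingale h' ℱ μ := by
      have := hsubm.add_martingale (martingale_const ℱ μ c)
      exact this
    have hbdd : ∀ n, eLpNorm (h' n) 1 μ ≤
        ENNReal.toNNReal (2 * μ Set.univ * ENNReal.ofReal ((i : ℝ) + c)) := by
      intro n
      have h1 : eLpNorm (h' n) 1 μ ≤ 2 * μ Set.univ * ENNReal.ofReal ((i : ℝ) + c) := by
        refine eLpNorm_one_le_of_le' (hsubm'.integrable n) ?_ ?_
        · simpa [hh'] using hint_lb n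
        · filter_upwards [] with ω
          have := hle n ω
          simp only [hh']
          linarith
      refine h1.trans_eq ?_
      rw [ENNReal.coe_toNNReal]
      exact ENNReal.mul_ne_top (ENNReal.mul_ne_top (by simp) (measure_ne_top μ _))
        ENNReal.ofReal_ne_top
    have := hsubm'.exists_ae_tendsto_of_bdd hbdd
    filter_upwards [this] with ω ⟨l, hl⟩
    exact ⟨l - c, by simpa [hh'] using hl.sub_const c⟩
  rw [← ae_all_iff] at key
  filter_upwards [key, hξ_sum] with ω hconv hsum
  -- the partial sums of ξ are bounded, so for some i the hitting time is never reached
  have hS_tendsto : Tendsto (fun n => S n ω) atTop (nhds (∑' t, ξ t ω)) :=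
    hsum.hasSum.tendsto_sum_nat
  obtain ⟨B, hB⟩ := hS_tendsto.bddAbove_range
  obtain ⟨i, hi⟩ := exists_nat_gt B
  have hnever : ∀ n, u n ω < (i : ℝ) := fun n =>
    lt_of_le_of_lt (hB ⟨n + 1, rfl⟩) hi
  have heq : ∀ n, stoppedValue f (fun ω => ((hittingBtwn u (Set.Ici (i : ℝ)) 0 n ω : ℕ) : WithTop ℕ)) ω = f n ω := by
    intro n
    rw [stoppedValue, hittingBtwn, if_neg]
    · rfl
    rintro ⟨j, -, hj⟩
    exact absurd hj (by simpa using (hnever j).not_ge)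
  obtain ⟨l, hl⟩ := hconv i
  simp_rw [heq] at hl
  -- so f converges, hence z + T converges
  have hzT : Tendsto (fun n => z n ω + T n ω) atTop (nhds ((∑' t, ξ t ω) - l)) := by
    have : (fun n => z n ω + T n ω) = fun n => S n ω - f n ω := by
      ext n; simp [hf, hM]; ring
    rw [this]
    exact hS_tendsto.sub hl
  obtain ⟨B', hB'⟩ := hzT.bddAbove_range
  have hζ_summable : Summable fun t => ζ t ω := by
    refine summable_of_sum_range_le (c := B') (fun t => hζ_nonneg t ω) fun n => ?_
    have h1 : T n ω ≤ z n ω + T n ω := le_add_of_nonneg_left (hz_nonneg n ω)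
    exact (h1.trans (hB' ⟨n, rfl⟩))
  refine ⟨⟨(∑' t, ξ t ω) - l - ∑' t, ζ t ω, ?_⟩, hζ_summable⟩
  have hT_tendsto : Tendsto (fun n => T n ω) atTop (nhds (∑' t, ζ t ω)) :=
    hζ_summable.hasSum.tendsto_sum_nat
  have : (fun n => z n ω) = fun n => (z n ω + T n ω) - T n ω := by ext n; ring
  rw [this]
  exact hzT.sub hT_tendsto
end

section
/- Achievability of the greedy extreme points by a fixed-priority policy: on a probability space, suppose for each node i the generated resources D_i(t), t = 1,2,…, are i.i.d. random variables with 0 ≤ D_i(t) ≤ B and E[D_i(t)] = D_i > 0 (the vectors (D_i(t))_{i∈N} being i.i.d. across t). Let n = |N|, let σ : {1,…,n} → N be a bijection, and set S_σ(i) = {σ(1),…,σ(i)}. Consider the policy π^σ under which, at every time t, every node in N_{σ(1)} gives all its generated resource to σ(1), and for each k = 2,…,n every node in N_{σ(k)} − ∪_{l=1}^{k−1} N_{σ(l)} gives all its generated resource to σ(k). Then almost surely the time-averaged received resource of each node converges: (1/t) Σ_{τ=1}^{t} R_{σ(1)}(τ) → f(S_σ(1)) and (1/t) Σ_{τ=1}^{t}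 R_{σ(i)}(τ) → f(S_σ(i)) − f(S_σ(i−1)) for 2 ≤ i ≤ n, where R_j(τ) is the total resource node j receives at time τ. -/
open Finset
open scoped Classical

noncomputable section

open MeasureTheory ProbabilityTheory Filter

namespace SharingEcon


/-- Shifting a Cesàro average from `range t` to `Icc 1 t` preserves the limit. -/
lemma cesaro_shift (X : ℕ → ℝ) (μ : ℝ)
    (h : Tendsto (fun t : ℕ => (∑ τ ∈ Finset.range t, X τ) / t) atTop (nhds μ)) :
    Tendsto (fun t : ℕ => (∑ τ ∈ Finset.Icc 1 t, X τ) / t) atTop (nhds μ) := by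
  have h1 : Tendsto (fun t : ℕ => (∑ τ ∈ Finset.range (t + 1), X τ) / ((t : ℝ) + 1)) atTop
      (nhds μ) := by
    have := h.comp (tendsto_add_atTop_nat 1)
    refine Tendsto.congr (fun t => ?_) this
    show (∑ τ ∈ Finset.range (t + 1), X τ) / ((t + 1 : ℕ) : ℝ) = _
    push_cast
    ring
  have hrat : Tendsto (fun t : ℕ => ((t : ℝ) + 1) / t) atTop (nhds 1) := by
    have h0 : Tendsto (fun t : ℕ => 1 + 1 / (t : ℝ)) atTop (nhds (1 + 0)) :=
      tendsto_const_nhds.add tendsto_one_div_atTop_nhds_zero_nat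
    rw [add_zero] at h0
    apply h0.congr'
    filter_upwards [eventually_ge_atTop 1] with t ht
    have ht' : (t : ℝ) ≠ 0 := by
      have : (1 : ℝ) ≤ t := by exact_mod_cast ht
      linarith
    field_simp
  have h2 : Tendsto (fun t : ℕ => (∑ τ ∈ Finset.range (t + 1), X τ) / t) atTop (nhds μ) := by
    have := h1.mul hrat
    rw [mul_one] at this
    apply this.congr'
    filter_upwards [eventually_ge_atTop 1] with t ht
    have ht' : (t : ℝ) ≠ 0 := by
      have : (1 : ℝ) ≤ t := by exact_mod_cast ht
      linarith
    have ht1 : ((t : ℝ) + 1) ≠ 0 := by positivity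
    field_simp
  have h0 : Tendsto (fun t : ℕ => X 0 / (t : ℝ)) atTop (nhds 0) := by
    have := tendsto_one_div_atTop_nhds_zero_nat.const_mul (X 0)
    rw [mul_zero] at this
    apply this.congr
    intro t
    rw [mul_one_div]
  have h3 := h2.sub h0
  rw [sub_zero] at h3
  apply h3.congr'
  filter_upwards [eventually_ge_atTop 1] with t ht
  have hsum : ∑ τ ∈ Finset.range (t + 1), X τ = X 0 + ∑ τ ∈ Finset.Icc 1 t, X τ := by
    rw [Finset.range_eq_Ico, Finset.sum_eq_sum_Ico_succ_bot (Nat.succ_pos t),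
      Nat.succ_eq_add_one, Finset.Ico_add_one_right_eq_Icc, zero_add]
  rw [hsum]
  ring

/-- under the fixed-priority policy `π^σ` (each node in
`N_{σ(k)} − ∪_{l<k} N_{σ(l)}` always gives all its generated resource to `σ(k)`), almost surely
the time-averaged received resources converge to the greedy extreme point:
`(1/t) Σ_{τ=1}^t R_{σ(k)}(τ) → f(S_σ(k+1)) − f(S_σ(k))` (0-based indexing of `σ`, with
`S_σ(m) = {σ(0),…,σ(m−1)}`, `S_σ(0) = ∅`, `f(∅) = 0`). -/
theorem priority_policy_achieves_greedy_point {V : Type*} [Fintype V] [DecidableEq V]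
    {Ω : Type*} [MeasureSpace Ω] [IsProbabilityMeasure (ℙ : Measure Ω)]
    (G : SimpleGraph V) [DecidableRel G.Adj]
    (hconn : G.Connected) (hniso : ∀ i, (G.neighborFinset i).Nonempty)
    (D : V → ℝ) (hD : ∀ i, 0 < D i) (B : ℝ)
    (Dgen : ℕ → Ω → V → ℝ)
    (hmeas : ∀ t, Measurable (Dgen t))
    (hbdd : ∀ t ω i, 0 ≤ Dgen t ω i ∧ Dgen t ω i ≤ B)
    (hindep : iIndepFun Dgen ℙ)
    (hident : ∀ t, IdentDistrib (Dgen t) (Dgen 1) ℙ ℙ)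
    (hmean : ∀ t i, ∫ ω, Dgen t ω i = D i)
    (n : ℕ) (hn : n = Fintype.card V) (σ : Fin n ≃ V)
    (Sσ : ℕ → Finset V)
    (hSσ : ∀ m : ℕ, Sσ m = (Finset.univ.filter fun j : Fin n => (j : ℕ) < m).image σ)
    -- `T k` is the set of nodes that give their resource to `σ k` under policy `π^σ`
    (T : Fin n → Finset V)
    (hT : ∀ k : Fin n, T k =
      G.neighborFinset (σ k) \
        (Finset.univ.filter fun j : Fin n => j < k).biUnion fun l => G.neighborFinset (σ l))
    (R : ℕ → Ω → V → ℝ)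
    (hR : ∀ τ ω (k : Fin n), R τ ω (σ k) = ∑ i ∈ T k, Dgen τ ω i) :
    ∀ᵐ ω, ∀ k : Fin n,
      Tendsto (fun t : ℕ => (∑ τ ∈ Finset.Icc 1 t, R τ ω (σ k)) / (t : ℝ)) atTop
        (nhds (fS G D (Sσ ((k : ℕ) + 1)) - fS G D (Sσ (k : ℕ)))) := by
  -- Strong law of large numbers for each coordinate
  have slln : ∀ i : V, ∀ᵐ ω, Tendsto
      (fun t : ℕ => (∑ τ ∈ Finset.Icc 1 t, Dgen τ ω i) / t) atTop (nhds (D i)) := by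
    intro i
    set X : ℕ → Ω → ℝ := fun τ ω => Dgen τ ω i with hX
    have hXmeas : ∀ τ, Measurable (X τ) := fun τ => (measurable_pi_apply i).comp (hmeas τ)
    have hint : Integrable (X 0) := by
      apply (integrable_const B).mono' (hXmeas 0).aestronglyMeasurable
      filter_upwards with ω
      have h1 := hbdd 0 ω i
      have hB : 0 ≤ B := le_trans h1.1 h1.2
      rw [Real.norm_eq_abs, abs_le]
      constructor <;> [linarith [h1.1]; exact h1.2]
    have hindep' : Pairwise (fun a b => IndepFun (X a) (X b) ℙ) := fun a b hab =>
      (hindep.indepFun hab).comp (measurable_pi_apply i) (measurable_pi_apply i)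
    have hident' : ∀ τ, IdentDistrib (X τ) (X 0) ℙ ℙ := fun τ =>
      ((hident τ).trans (hident 0).symm).comp (measurable_pi_apply i)
    have hsl := strong_law_ae_real X hint hindep' hident'
    have hμ : (ℙ : Measure Ω)[X 0] = D i := hmean 0 i
    rw [hμ] at hsl
    filter_upwards [hsl] with ω hω using cesaro_shift _ _ hω
  -- Combinatorial identity: `∑ i ∈ T k, D i = fS (Sσ (k+1)) - fS (Sσ k)`
  have hnb : ∀ m : ℕ, nbrs G (Sσ m) =
      (Finset.univ.filter fun j : Fin n => (j : ℕ) < m).biUnion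
        fun j => G.neighborFinset (σ j) := by
    intro m
    rw [hSσ, nbrs, Finset.image_biUnion]
  have key : ∀ k : Fin n, ∑ i ∈ T k, D i =
      fS G D (Sσ ((k : ℕ) + 1)) - fS G D (Sσ (k : ℕ)) := by
    intro k
    have hTk : T k = G.neighborFinset (σ k) \ nbrs G (Sσ (k : ℕ)) := by
      rw [hT k, hnb]
      congr 2
    have hfilter : (Finset.univ.filter fun j : Fin n => (j : ℕ) < (k : ℕ) + 1) =
        insert k (Finset.univ.filter fun j : Fin n => (j : ℕ) < (k : ℕ)) := by
      ext j
      simp only [Finset.mem_filter, Finset.mem_insert, Finset.mem_univ, true_and]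
      constructor
      · intro hj
        rcases Nat.lt_succ_iff_lt_or_eq.1 hj with h | h
        · exact Or.inr h
        · exact Or.inl (Fin.ext h)
      · rintro (rfl | hj)
        · exact Nat.lt_succ_self _
        · exact Nat.lt_succ_of_lt hj
    have hunion : nbrs G (Sσ ((k : ℕ) + 1)) =
        G.neighborFinset (σ k) ∪ nbrs G (Sσ (k : ℕ)) := by
      rw [hnb, hnb, hfilter, Finset.biUnion_insert]
    have hsub : nbrs G (Sσ (k : ℕ)) ⊆ nbrs G (Sσ ((k : ℕ) + 1)) := by
      rw [hunion]; exact Finset.subset_union_right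
    have := Finset.sum_sdiff (f := D) hsub
    unfold fS
    rw [eq_sub_iff_add_eq, ← this]
    congr 1
    rw [hTk, hunion, Finset.union_sdiff_right]
  -- Put it together
  filter_upwards [ae_all_iff.2 slln] with ω hω k
  have heq : ∀ t : ℕ, (∑ τ ∈ Finset.Icc 1 t, R τ ω (σ k)) / (t : ℝ) =
      ∑ i ∈ T k, (∑ τ ∈ Finset.Icc 1 t, Dgen τ ω i) / t := by
    intro t
    rw [← Finset.sum_div]
    congr 1
    rw [Finset.sum_comm]
    exact Finset.sum_congr rfl fun τ _ => hR τ ω k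
  have hconv : Tendsto (fun t : ℕ => ∑ i ∈ T k, (∑ τ ∈ Finset.Icc 1 t, Dgen τ ω i) / t)
      atTop (nhds (∑ i ∈ T k, D i)) := tendsto_finset_sum _ fun i _ => hω i
  rw [key k] at hconv
  exact hconv.congr fun t => (heq t).symm


end SharingEcon
end
end
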